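/- Let f(t) = 1/√(2e^t − e^{t/2}) for t ∈ (0,∞). Then ∫₀^∞ f'(t)² √(e^t − e^{t/2}) dt = 3π/32. -/

import Mathlib

open Real MeasureTheory Set

noncomputable def Gaux (x : ℝ) : ℝ :=
  x + (3/2) * Real.arctan x - x / (1 + x^2)^2 - 3 * x / (2 * (1 + x^2))

lemma hasDerivAt_Gaux (x : ℝ) :
    HasDerivAt Gaux (1 + 3 / (1 + x^2) - 4 / (1 + x^2)^3) x := by
  have h1 : (0:ℝ) < 1 + x^2 := by positivity
  have hx : HasDerivAt (fun y : ℝ => y) 1 x := hasDerivAt_id x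
  have hsq : HasDerivAt (fun y : ℝ => 1 + y^2) (2*x) x := by
    simpa using ((hasDerivAt_pow 2 x).const_add 1)
  have hsq2 : HasDerivAt (fun y : ℝ => (1 + y^2)^2) (2*(1+x^2)*(2*x)) x := by
    exact (hsq.pow 2).congr_deriv (by norm_num)
  have ha : HasDerivAt (fun y : ℝ => (3/2) * Real.arctan y) ((3/2) * (1/(1+x^2))) x := by
    simpa using (Real.hasDerivAt_arctan x).const_mul (3/2)
  have hd1 : HasDerivAt (fun y : ℝ => y / (1 + y^2)^2)
      ((1 * (1+x^2)^2 - x * (2*(1+x^2)*(2*x))) / ((1+x^2)^2)^2) x :=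
    hx.div hsq2 (by positivity)
  have hd2 : HasDerivAt (fun y : ℝ => 3 * y / (2 * (1 + y^2)))
      ((3 * (2*(1+x^2)) - 3*x * (2*(2*x))) / (2*(1+x^2))^2) x := by
    have h3 : HasDerivAt (fun y : ℝ => 3 * y) 3 x := by simpa using hx.const_mul 3
    have h4 : HasDerivAt (fun y : ℝ => 2 * (1 + y^2)) (2*(2*x)) x := hsq.const_mul 2
    exact h3.div h4 (by positivity)
  have := ((hx.add ha).sub hd1).sub hd2
  refine this.congr_deriv ?_
  field_simp
  ring

lemma continuous_Gaux : Continuous Gaux := by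
  unfold Gaux
  refine ((continuous_id.add (continuous_const.mul Real.continuous_arctan)).sub
    (Continuous.div continuous_id (by continuity) fun x => by positivity)).sub
    (Continuous.div (by continuity) (by continuity) fun x => by positivity)

lemma hasDerivAt_X {t : ℝ} (ht : 0 < t) :
    HasDerivAt (fun t : ℝ => Real.sqrt (1 - Real.exp (-(t/2))))
      (Real.exp (-(t/2)) / (4 * Real.sqrt (1 - Real.exp (-(t/2))))) t := by
  have hs : Real.exp (-(t/2)) < 1 := by
    rw [show (1:ℝ) = Real.exp 0 from (Real.exp_zero).symm]
    exact Real.exp_lt_exp.mpr (by linarith)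
  have hu : 0 < 1 - Real.exp (-(t/2)) := by linarith
  have h1 : HasDerivAt (fun t : ℝ => -(t/2)) (-(1/2)) t := by
    exact ((hasDerivAt_id t).div_const 2).neg.congr_deriv (by norm_num)
  have h2 : HasDerivAt (fun t : ℝ => Real.exp (-(t/2)))
      (Real.exp (-(t/2)) * -(1/2)) t := (Real.hasDerivAt_exp _).comp t h1
  have h3 : HasDerivAt (fun t : ℝ => 1 - Real.exp (-(t/2)))
      (Real.exp (-(t/2)) / 2) t := by
    exact (h2.const_sub 1).congr_deriv (by ring)
  have h4 := (Real.hasDerivAt_sqrt hu.ne').comp t h3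
  refine h4.congr_deriv ?_
  have hx : Real.sqrt (1 - Real.exp (-(t/2))) ≠ 0 := (Real.sqrt_pos.mpr hu).ne'
  field_simp
  ring

lemma key_id (E x a : ℝ) (hE : 1 < E) (hx2 : x^2 = 1 - E⁻¹) (ha2 : a^2 = 2*E^2 - E)
    (hx : 0 < x) (ha : 0 < a) :
    (1/4) * ((1 + 3/(1+x^2) - 4/(1+x^2)^3) * (E⁻¹ / (4*x)))
      = (-(1/(2*a) * (2*E^2 - E/2)) / a^2)^2 * (E*x) := by
  have hE0 : (0:ℝ) < E := by linarith
  have h1x : 1 + x^2 = 2 - E⁻¹ := by rw [hx2]; ring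
  have hR : (-(1/(2*a) * (2*E^2 - E/2)) / a^2)^2 = (2*E^2-E/2)^2/(4*(2*E^2-E)^3) := by
    rw [show ((-(1/(2*a) * (2*E^2 - E/2)))/a^2)^2 = (2*E^2-E/2)^2/(4*(a^2)^3) by
      field_simp; ring, ha2]
  have hxinv : E⁻¹ / (4*x) = E⁻¹ * x / (4*(1-E⁻¹)) := by
    rw [← hx2]; field_simp
  have e1 : 2 - E⁻¹ = (2*E-1)/E := by field_simp
  have e2 : 1 - E⁻¹ = (E-1)/E := by field_simp
  rw [hR, hxinv, h1x, e1, e2]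
  have h2E : (2*E-1) ≠ 0 := by nlinarith
  have h1E : (E-1) ≠ 0 := by nlinarith
  have hg0 : (2*E^2 - E) ≠ 0 := by nlinarith
  field_simp
  ring

theorem stmt_0 (f : ℝ → ℝ)
    (hf : ∀ t : ℝ, f t = 1 / Real.sqrt (2 * Real.exp t - Real.exp (t / 2))) :
    ∫ t in Set.Ioi (0 : ℝ),
      (deriv f t) ^ 2 * Real.sqrt (Real.exp t - Real.exp (t / 2)) = 3 * π / 32 := by
  set F : ℝ → ℝ := fun t => (1/4) * Gaux (Real.sqrt (1 - Real.exp (-(t/2)))) with hF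
  have hXc : Continuous (fun t : ℝ => Real.sqrt (1 - Real.exp (-(t/2)))) :=
    Real.continuous_sqrt.comp (continuous_const.sub
      (Real.continuous_exp.comp ((continuous_id.div_const 2).neg)))
  have hFc : Continuous F := (continuous_const.mul (continuous_Gaux.comp hXc))
  -- derivative of F equals the integrand on Ioi 0
  have hderiv : ∀ t ∈ Set.Ioi (0:ℝ), HasDerivAt F
      ((deriv f t) ^ 2 * Real.sqrt (Real.exp t - Real.exp (t / 2))) t := by
    intro t ht
    rw [Set.mem_Ioi] at ht
    have hE : 1 < Real.exp (t/2) := by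
      rw [show (1:ℝ) = Real.exp 0 from (Real.exp_zero).symm]
      exact Real.exp_lt_exp.mpr (by linarith)
    have hE0 : 0 < Real.exp (t/2) := Real.exp_pos _
    have hE2 : Real.exp t = Real.exp (t/2) ^ 2 := by
      rw [sq, ← Real.exp_add]; ring_nf
    have hsneg : Real.exp (-(t/2)) = (Real.exp (t/2))⁻¹ := Real.exp_neg _
    have hu : 0 < 1 - Real.exp (-(t/2)) := by
      rw [hsneg]; have : (Real.exp (t/2))⁻¹ < 1 := by
        rw [inv_lt_one_iff₀]; right; exact hE
      linarith
    set x := Real.sqrt (1 - Real.exp (-(t/2))) with hxdef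
    have hxpos : 0 < x := Real.sqrt_pos.mpr hu
    have hx2 : x^2 = 1 - (Real.exp (t/2))⁻¹ := by
      rw [hxdef, Real.sq_sqrt hu.le, hsneg]
    have hg : 0 < 2 * Real.exp t - Real.exp (t/2) := by nlinarith
    set a := Real.sqrt (2 * Real.exp t - Real.exp (t/2)) with hadef
    have hapos : 0 < a := Real.sqrt_pos.mpr hg
    have ha2 : a^2 = 2 * (Real.exp (t/2))^2 - Real.exp (t/2) := by
      rw [hadef, Real.sq_sqrt hg.le, hE2]
    -- deriv of f
    have hgd : HasDerivAt (fun t : ℝ => 2 * Real.exp t - Real.exp (t/2))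
        (2 * Real.exp t - Real.exp (t/2) / 2) t := by
      have ha' : HasDerivAt (fun t : ℝ => 2 * Real.exp t) (2 * Real.exp t) t :=
        (Real.hasDerivAt_exp t).const_mul 2
      have hb' : HasDerivAt (fun t : ℝ => Real.exp (t/2)) (Real.exp (t/2) * (1/2)) t :=
        (Real.hasDerivAt_exp _).comp t (by simpa using (hasDerivAt_id t).div_const 2)
      have := ha'.sub hb'
      refine this.congr_deriv ?_
      ring
    have hsq := (Real.hasDerivAt_sqrt hg.ne').comp t hgd
    have hfe : f = fun t => (Real.sqrt (2 * Real.exp t - Real.exp (t/2)))⁻¹ :=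
      funext fun u => by rw [hf u, one_div]
    have hderivf : deriv f t = -((1 / (2 * a) * (2 * Real.exp t - Real.exp (t/2) / 2)) / a^2) := by
      rw [hfe]
      simpa [Function.comp_def, neg_div, ← hadef, Pi.inv_def] using (hsq.inv hapos.ne').deriv
    -- deriv of F
    have hXd := hasDerivAt_X ht
    have hFd : HasDerivAt F
        ((1/4) * ((1 + 3/(1+x^2) - 4/(1+x^2)^3) * (Real.exp (-(t/2)) / (4*x)))) t :=
      ((hasDerivAt_Gaux x).comp t hXd).const_mul (1/4)
    -- identify the two derivative expressions
    have hb : Real.sqrt (Real.exp t - Real.exp (t/2)) = Real.exp (t/2) * x := by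
      rw [hE2, show Real.exp (t/2)^2 - Real.exp (t/2)
            = Real.exp (t/2)^2 * (1 - (Real.exp (t/2))⁻¹) by field_simp,
        Real.sqrt_mul (by positivity), Real.sqrt_sq hE0.le, hxdef, hsneg]
    have hkey := key_id (Real.exp (t/2)) x a hE hx2 ha2 hxpos hapos
    have : (deriv f t) ^ 2 * Real.sqrt (Real.exp t - Real.exp (t/2))
        = (1/4) * ((1 + 3/(1+x^2) - 4/(1+x^2)^3) * (Real.exp (-(t/2)) / (4*x))) := by
      rw [hderivf, hb, hsneg, hkey, hE2]
      ring
    rw [show Real.exp (t / 2) = Real.exp (t/2) from rfl] at this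
    rw [this]
    exact hFd
  -- nonnegativity
  have hpos : ∀ t ∈ Set.Ioi (0:ℝ),
      0 ≤ (deriv f t) ^ 2 * Real.sqrt (Real.exp t - Real.exp (t / 2)) := fun t _ => by
    positivity
  -- limit at infinity
  have hXlim : Filter.Tendsto (fun t : ℝ => Real.sqrt (1 - Real.exp (-(t/2))))
      Filter.atTop (nhds 1) := by
    have h1 : Filter.Tendsto (fun t : ℝ => -(t/2)) Filter.atTop Filter.atBot := by
      apply Filter.tendsto_neg_atBot_iff.mpr
      exact Filter.tendsto_id.atTop_div_const two_pos
    have h2 : Filter.Tendsto (fun t : ℝ => Real.exp (-(t/2))) Filter.atTop (nhds 0) :=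
      Real.tendsto_exp_atBot.comp h1
    have h3 : Filter.Tendsto (fun t : ℝ => 1 - Real.exp (-(t/2))) Filter.atTop (nhds 1) := by
      simpa using (tendsto_const_nhds.sub h2)
    have := (Real.continuous_sqrt.tendsto 1).comp h3
    simpa [Function.comp_def] using this
  have hFlim : Filter.Tendsto F Filter.atTop (nhds (3 * π / 32)) := by
    have hGc : Continuous (fun y : ℝ => (1/4 : ℝ) * Gaux y) :=
      continuous_const.mul continuous_Gaux
    have hc := (hGc.tendsto 1).comp hXlim
    have hval : (1/4 : ℝ) * Gaux 1 = 3 * π / 32 := by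
      unfold Gaux
      rw [Real.arctan_one]
      norm_num
      ring
    rw [hval] at hc
    simpa [hF, Function.comp_def] using hc
  have hF0 : F 0 = 0 := by
    have : Real.sqrt (1 - Real.exp (-(0/2 : ℝ))) = 0 := by norm_num
    rw [hF]
    simp only [this]
    unfold Gaux
    simp [Real.arctan_zero]
  rw [MeasureTheory.integral_Ioi_of_hasDerivAt_of_nonneg
    (hFc.continuousWithinAt) hderiv hpos hFlim, hF0, sub_zero]
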